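/- Let n ≥ 1. (i) If 1 ≤ a and a + 2 ≤ b ≤ n, then for all integers l, m ≥ 1 the type A Kostant partition function satisfies K(l·α_a + α_{a+1} + ⋯ + α_{b−1} + m·α_b) = 2^{b−a}. (ii) If 1 ≤ a and a + 1 ≤ b ≤ n, then for every integer m ≥ 1, K(α_a + α_{a+1} + ⋯ + α_{b−1} + m·α_b) = 2^{b−a}. -/

import Mathlib

open Finset

/-- The `i`-th standard basis vector of `ℤ^{n+1}`. -/
def eps (n : ℕ) (i : Fin (n + 1)) : Fin (n + 1) → ℤ := Pi.single i 1

/-- The type `A_n` Kostant partition function. -/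
noncomputable def kostant (n : ℕ) (v : Fin (n + 1) → ℤ) : ℕ :=
  Set.ncard {m : Fin (n + 1) → Fin (n + 1) → ℕ |
    (∀ i j, ¬ i < j → m i j = 0) ∧
    ∑ i, ∑ j, (m i j : ℤ) • (eps n i - eps n j) = v}

/-- The simple roots `α_i = ε_i - ε_{i+1}` of `sl_{n+1}(ℂ)`. -/
def alphaA (n : ℕ) (i : Fin n) : Fin (n + 1) → ℤ := eps n i.castSucc - eps n i.succ

namespace KW
variable {n : ℕ}


-- extraction: sum over univ equals 1 in ℕ
lemma exists_unique_of_sum_eq_one {α : Type*} [Fintype α] [DecidableEq α] (f : α → ℕ)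
    (h : ∑ j, f j = 1) : ∃ j0, f j0 = 1 ∧ ∀ j, j ≠ j0 → f j = 0 := by
  have h1 : ∃ j0, f j0 ≠ 0 := by
    by_contra hc
    push_neg at hc
    simp [hc] at h
  obtain ⟨j0, hj0⟩ := h1
  have hle : f j0 ≤ 1 := h ▸ Finset.single_le_sum (fun i _ => Nat.zero_le _) (Finset.mem_univ j0)
  have hf1 : f j0 = 1 := by omega
  refine ⟨j0, hf1, fun j hj => ?_⟩
  have := Finset.add_sum_erase Finset.univ f (Finset.mem_univ j0)
  have hz : ∑ x ∈ Finset.univ.erase j0, f x = 0 := by omega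
  exact (Finset.sum_eq_zero_iff.mp hz) j (Finset.mem_erase.mpr ⟨hj, Finset.mem_univ j⟩)

-- case split: sum = l, f a' ≥ l - 1
lemma sum_split {α : Type*} [Fintype α] [DecidableEq α] (f : α → ℕ) (a' : α) (l : ℕ)
    (h : ∑ j, f j = l) (hge : l - 1 ≤ f a') :
    (f a' = l ∧ ∀ j, j ≠ a' → f j = 0) ∨
    (f a' = l - 1 ∧ 1 ≤ l ∧ ∃ j0, j0 ≠ a' ∧ f j0 = 1 ∧ ∀ j, j ≠ j0 → j ≠ a' → f j = 0) := by
  have hle : f a' ≤ l := h ▸ Finset.single_le_sum (fun i _ => Nat.zero_le _) (Finset.mem_univ a')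
  have hsplit := Finset.add_sum_erase Finset.univ f (Finset.mem_univ a')
  rw [h] at hsplit
  rcases Nat.eq_or_lt_of_le hle with heq | hlt
  · left
    refine ⟨heq, fun j hj => ?_⟩
    have hz : ∑ x ∈ Finset.univ.erase a', f x = 0 := by omega
    exact (Finset.sum_eq_zero_iff.mp hz) j (Finset.mem_erase.mpr ⟨hj, Finset.mem_univ j⟩)
  · right
    have hfa : f a' = l - 1 := by omega
    have hrest : ∑ x ∈ Finset.univ.erase a', f x = 1 := by omega
    have h1 : ∃ j0 ∈ Finset.univ.erase a', f j0 ≠ 0 := by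
      by_contra hc
      push_neg at hc
      rw [Finset.sum_eq_zero hc] at hrest; omega
    obtain ⟨j0, hj0mem, hj0⟩ := h1
    have hj0ne : j0 ≠ a' := (Finset.mem_erase.mp hj0mem).1
    have hle1 : f j0 ≤ 1 := hrest ▸ Finset.single_le_sum (fun i _ => Nat.zero_le _) hj0mem
    have h2 := Finset.add_sum_erase _ f hj0mem
    rw [hrest] at h2
    refine ⟨hfa, by omega, j0, hj0ne, by omega, fun j hj hja => ?_⟩
    have hz : ∑ x ∈ (Finset.univ.erase a').erase j0, f x = 0 := by omega
    exact (Finset.sum_eq_zero_iff.mp hz) j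
      (Finset.mem_erase.mpr ⟨hj, Finset.mem_erase.mpr ⟨hja, Finset.mem_univ j⟩⟩)

-- ncard of disjoint biUnion over a Finset
lemma ncard_biUnion {α β : Type*} (s : Finset α) (f : α → Set β)
    (hfin : ∀ a ∈ s, (f a).Finite)
    (hdisj : ∀ a ∈ s, ∀ b ∈ s, a ≠ b → Disjoint (f a) (f b)) :
    (⋃ a ∈ s, f a).ncard = ∑ a ∈ s, (f a).ncard := by
  classical
  induction s using Finset.induction_on with
  | empty => simp
  | insert _ _ hx ih =>
    rename_i a s
    rw [Finset.set_biUnion_insert, Finset.sum_insert hx]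
    have hub : (⋃ x ∈ s, f x).Finite := by
      rw [← Finset.set_biUnion_coe]
      exact Set.Finite.biUnion s.finite_toSet (fun b hb => hfin b (Finset.mem_insert_of_mem hb))
    rw [Set.ncard_union_eq ?_ (hfin a (Finset.mem_insert_self a s)) hub]
    · rw [ih (fun b hb => hfin b (Finset.mem_insert_of_mem hb))
        (fun b hb c hc => hdisj b (Finset.mem_insert_of_mem hb) c (Finset.mem_insert_of_mem hc))]
    · rw [Set.disjoint_iUnion₂_right]
      intro b hb
      exact hdisj a (Finset.mem_insert_self a s) b (Finset.mem_insert_of_mem hb)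
        (fun h => hx (h ▸ hb))

lemma biUnion_finite {α β : Type*} (s : Finset α) (f : α → Set β)
    (hfin : ∀ a ∈ s, (f a).Finite) : (⋃ a ∈ s, f a).Finite := by
  rw [← Finset.set_biUnion_coe]
  exact Set.Finite.biUnion s.finite_toSet hfin



def Sol (n : ℕ) (v : Fin (n + 1) → ℤ) : Set (Fin (n + 1) → Fin (n + 1) → ℕ) :=
  {m | (∀ i j, ¬ i < j → m i j = 0) ∧
    ∑ i, ∑ j, (m i j : ℤ) • (eps n i - eps n j) = v}

lemma kostant_eq (v : Fin (n + 1) → ℤ) : kostant n v = (Sol n v).ncard := rfl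

def NS (m : Fin (n + 1) → Fin (n + 1) → ℕ) (t : Fin (n + 1)) : ℤ :=
  (∑ j, (m t j : ℤ)) - ∑ i, (m i t : ℤ)

lemma sum_apply (m : Fin (n + 1) → Fin (n + 1) → ℕ) (t : Fin (n + 1)) :
    (∑ i, ∑ j, (m i j : ℤ) • (eps n i - eps n j)) t = NS m t := by
  have : (∑ i, ∑ j, (m i j : ℤ) • (eps n i - eps n j)) t
      = ∑ i, ∑ j, ((m i j : ℤ) * (if i = t then 1 else 0) - (m i j : ℤ) * (if j = t then 1 else 0)) := by
    simp [eps, Pi.single_apply, mul_sub]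
  rw [this]
  rw [Finset.sum_congr rfl (fun i _ => Finset.sum_sub_distrib _ _), Finset.sum_sub_distrib]
  unfold NS
  congr 1
  · rw [Finset.sum_comm]
    simp [Finset.sum_ite_eq', mul_comm]
  · simp [Finset.sum_ite_eq', mul_comm]

lemma mem_sol_iff (m : Fin (n + 1) → Fin (n + 1) → ℕ) (v : Fin (n + 1) → ℤ) :
    m ∈ Sol n v ↔ (∀ i j, ¬ i < j → m i j = 0) ∧ ∀ t, NS m t = v t := by
  unfold Sol
  rw [Set.mem_setOf_eq, and_congr_right_iff]
  intro _
  rw [funext_iff]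
  exact forall_congr' fun t => by rw [← sum_apply]

lemma row_sum_eq_zero {m : Fin (n + 1) → Fin (n + 1) → ℕ} {i : Fin (n+1)}
    (h : ∑ j, (m i j : ℤ) = 0) : ∀ j, m i j = 0 := by
  intro j
  have h2 : ((∑ j, m i j : ℕ) : ℤ) = 0 := by push_cast; exact h
  have : (∑ j, m i j : ℕ) = 0 := by exact_mod_cast h2
  exact Finset.sum_eq_zero_iff.mp this j (Finset.mem_univ j)

/-- Lower support: if `v` vanishes below `c`, every solution has zero rows below `c`. -/
lemma lower_support {m : Fin (n + 1) → Fin (n + 1) → ℕ} {v : Fin (n + 1) → ℤ}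
    (hm : m ∈ Sol n v) (c : ℕ) (hv : ∀ t : Fin (n+1), (t : ℕ) < c → v t = 0) :
    ∀ i : Fin (n+1), (i : ℕ) < c → ∀ j, m i j = 0 := by
  obtain ⟨hwf, hns⟩ := (mem_sol_iff m v).mp hm
  have key : ∀ k : ℕ, ∀ i : Fin (n+1), (i : ℕ) = k → (i : ℕ) < c → ∀ j, m i j = 0 := by
    intro k
    induction k using Nat.strong_induction_on with
    | _ k ih =>
      intro i hik hic j
      have hin : ∑ i', (m i' i : ℤ) = 0 := by
        apply Finset.sum_eq_zero
        intro i' _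
        by_cases hlt : i' < i
        · have : (i' : ℕ) < k := hik ▸ hlt
          rw [ih _ this i' rfl (lt_trans (hik ▸ this) hic) i]
          simp
        · rw [hwf i' i hlt]; simp
      have hNS := hns i
      rw [hv i hic] at hNS
      unfold NS at hNS
      rw [hin] at hNS
      exact row_sum_eq_zero (by linarith) j
  intro i hic j
  exact key (i : ℕ) i rfl hic j

/-- Upper support: if `v` vanishes above `d`, every solution has zero columns above `d`. -/
lemma upper_support {m : Fin (n + 1) → Fin (n + 1) → ℕ} {v : Fin (n + 1) → ℤ}
    (hm : m ∈ Sol n v) (d : ℕ) (hv : ∀ t : Fin (n+1), d < (t : ℕ) → v t = 0) :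
    ∀ j : Fin (n+1), d < (j : ℕ) → ∀ i, m i j = 0 := by
  obtain ⟨hwf, hns⟩ := (mem_sol_iff m v).mp hm
  have key : ∀ k : ℕ, ∀ j : Fin (n+1), n - (j : ℕ) = k → d < (j : ℕ) → ∀ i, m i j = 0 := by
    intro k
    induction k using Nat.strong_induction_on with
    | _ k ih =>
      intro j hjk hjd i
      have hout : ∑ j', (m j j' : ℤ) = 0 := by
        apply Finset.sum_eq_zero
        intro j' _
        by_cases hlt : j < j'
        · have hj'n : (j' : ℕ) ≤ n := Nat.lt_succ_iff.mp j'.isLt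
          have : n - (j' : ℕ) < k := by omega
          rw [ih _ this j' rfl (by omega) j]
          simp
        · rw [hwf j j' hlt]; simp
      have hNS := hns j
      rw [hv j hjd] at hNS
      unfold NS at hNS
      rw [hout] at hNS
      have hin : ∑ i', (m i' j : ℤ) = 0 := by linarith
      have : (∑ i', m i' j : ℕ) = 0 := by exact_mod_cast hin
      exact Finset.sum_eq_zero_iff.mp this i (Finset.mem_univ i)
  intro j hjd i
  exact key (n - (j : ℕ)) j rfl hjd i

/-- add `q` units to the edge `(c, j0)` -/
def addE (c j0 : Fin (n+1)) (q : ℕ) (m : Fin (n + 1) → Fin (n + 1) → ℕ) :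
    Fin (n + 1) → Fin (n + 1) → ℕ :=
  fun i j => if i = c ∧ j = j0 then m i j + q else m i j

lemma addE_injective (c j0 : Fin (n+1)) (q : ℕ) : Function.Injective (addE (n := n) c j0 q) := by
  intro m1 m2 h
  funext i j
  have := congrFun (congrFun h i) j
  unfold addE at this
  split_ifs at this <;> omega

lemma NS_addE (c j0 : Fin (n+1)) (q : ℕ) (m : Fin (n + 1) → Fin (n + 1) → ℕ) (t : Fin (n+1)) :
    NS (addE c j0 q m) t = NS m t + (if t = c then (q:ℤ) else 0) - (if t = j0 then (q:ℤ) else 0) := by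
  unfold NS addE
  have key : ∀ (x y : Fin (n+1)), ((if x = c ∧ y = j0 then m x y + q else m x y : ℕ) : ℤ)
      = (m x y : ℤ) + (if x = c ∧ y = j0 then (q:ℤ) else 0) := by
    intro x y; split_ifs <;> simp
  have h1 : ∑ j, ((if t = c ∧ j = j0 then m t j + q else m t j : ℕ) : ℤ)
      = (∑ j, (m t j : ℤ)) + (if t = c then (q:ℤ) else 0) := by
    rw [Finset.sum_congr rfl (fun j _ => key t j), Finset.sum_add_distrib]
    congr 1
    by_cases htc : t = c <;> simp [htc, Finset.sum_ite_eq']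
  have h2 : ∑ i, ((if i = c ∧ t = j0 then m i t + q else m i t : ℕ) : ℤ)
      = (∑ i, (m i t : ℤ)) + (if t = j0 then (q:ℤ) else 0) := by
    rw [Finset.sum_congr rfl (fun i _ => key i t), Finset.sum_add_distrib]
    congr 1
    by_cases htj : t = j0 <;> simp [htj, Finset.sum_ite_eq']
  rw [h1, h2]
  ring


lemma mem_sol_addE_iff {c j0 : Fin (n+1)} (hcj : c < j0) (q : ℕ)
    (m : Fin (n + 1) → Fin (n + 1) → ℕ) (v : Fin (n + 1) → ℤ) :
    addE c j0 q m ∈ Sol n v ↔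
      m ∈ Sol n (fun t => v t - (if t = c then (q:ℤ) else 0) + (if t = j0 then (q:ℤ) else 0)) := by
  rw [mem_sol_iff, mem_sol_iff]
  constructor
  · rintro ⟨hwf, hns⟩
    constructor
    · intro i j hij
      have := hwf i j hij
      unfold addE at this
      split_ifs at this with h
      · exact absurd (h.1 ▸ h.2 ▸ hcj) hij
      · exact this
    · intro t
      have h2 : NS (addE c j0 q m) t
          = v t := hns t
      rw [NS_addE] at h2
      show NS m t = v t - (if t = c then (q:ℤ) else 0) + (if t = j0 then (q:ℤ) else 0)
      linarith
  · rintro ⟨hwf, hns⟩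
    constructor
    · intro i j hij
      unfold addE
      split_ifs with h
      · exact absurd (h.1 ▸ h.2 ▸ hcj) hij
      · exact hwf i j hij
    · intro t
      rw [NS_addE]
      have h2 : NS m t = v t - (if t = c then (q:ℤ) else 0) + (if t = j0 then (q:ℤ) else 0) :=
        hns t
      linarith

/-- the solution set of `q·(ε_p - ε_{p'})` with `p' = p+1` is a singleton -/
lemma sol_terminal (p p' : Fin (n+1)) (hp' : (p' : ℕ) = (p : ℕ) + 1) (q : ℕ) :
    Sol n (fun t => (if t = p then (q:ℤ) else 0) + (if t = p' then -(q:ℤ) else 0))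
      = {fun i j => if i = p ∧ j = p' then q else 0} := by
  have hpp' : p ≠ p' := by intro h; rw [h] at hp'; omega
  ext m
  simp only [Set.mem_singleton_iff]
  constructor
  · intro hm
    have hlow := lower_support hm (p : ℕ) (fun t ht => by
      have h1 : t ≠ p := by intro h; rw [h] at ht; omega
      have h2 : t ≠ p' := by intro h; rw [h] at ht; omega
      simp [h1, h2])
    have hhigh := upper_support hm (p' : ℕ) (fun t ht => by
      have h1 : t ≠ p := by intro h; rw [h] at ht; omega
      have h2 : t ≠ p' := by intro h; rw [h] at ht; omega
      simp [h1, h2])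
    obtain ⟨hwf, hns⟩ := (mem_sol_iff _ _).mp hm
    have hrow : ∀ j, j ≠ p' → m p j = 0 := by
      intro j hj
      by_cases hlt : p < j
      · by_cases hle : (j : ℕ) ≤ (p' : ℕ)
        · exfalso
          apply hj
          apply Fin.ext
          have := (Fin.lt_def).mp hlt
          omega
        · exact hhigh j (by omega) p
      · exact hwf p j hlt
    have hcol : ∀ i, m i p = 0 := by
      intro i
      by_cases hlt : i < p
      · exact hlow i ((Fin.lt_def).mp hlt) p
      · exact hwf i p hlt
    have hNSp := hns p
    unfold NS at hNSp
    have hin : ∑ i, (m i p : ℤ) = 0 := Finset.sum_eq_zero (fun i _ => by rw [hcol i]; rfl)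
    have hout : ∑ j, (m p j : ℤ) = (m p p' : ℤ) := by
      apply Finset.sum_eq_single
      · intro j _ hj; rw [hrow j hj]; rfl
      · intro h; exact absurd (Finset.mem_univ p') h
    rw [hin, hout, if_pos rfl, if_neg hpp'] at hNSp
    have hppq : m p p' = q := by omega
    funext i j
    split_ifs with h
    · rw [h.1, h.2]; exact hppq
    · -- i ≠ p or j ≠ p'
      by_cases hip : i = p
      · subst hip
        exact hrow j (fun hj => h ⟨rfl, hj⟩)
      · by_cases hlt : i < j
        · -- i ≥ p is impossible unless i = p: i < j ≤ p'
          by_cases hjle : (j : ℕ) ≤ (p' : ℕ)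
          · have hij := (Fin.lt_def).mp hlt
            by_cases hilow : (i : ℕ) < (p : ℕ)
            · exact hlow i hilow j
            · exfalso; apply hip; apply Fin.ext; omega
          · exact hhigh j (by omega) i
        · exact hwf i j hlt
  · intro hm
    subst hm
    rw [mem_sol_iff]
    constructor
    · intro i j hij
      split_ifs with h
      · exfalso
        apply hij
        rw [h.1, h.2, Fin.lt_def]
        omega
      · rfl
    · intro t
      unfold NS
      have h1 : ∑ j, ((if t = p ∧ j = p' then q else 0 : ℕ) : ℤ) = if t = p then (q:ℤ) else 0 := by
        by_cases htp : t = p <;> simp [htp, Finset.sum_ite_eq']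
      have h2 : ∑ i, ((if i = p ∧ t = p' then q else 0 : ℕ) : ℤ) = if t = p' then (q:ℤ) else 0 := by
        by_cases htp : t = p' <;> simp [htp, Finset.sum_ite_eq']
      rw [h1, h2]
      split_ifs <;> ring

lemma ncard_sol_terminal (p p' : Fin (n+1)) (hp' : (p' : ℕ) = (p : ℕ) + 1) (q : ℕ) :
    (Sol n (fun t => (if t = p then (q:ℤ) else 0) + (if t = p' then -(q:ℤ) else 0))).Finite ∧
    (Sol n (fun t => (if t = p then (q:ℤ) else 0) + (if t = p' then -(q:ℤ) else 0))).ncard = 1 := by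
  rw [sol_terminal p p' hp' q]
  exact ⟨Set.finite_singleton _, Set.ncard_singleton _⟩

lemma geo : ∀ k cv : ℕ, ∑ jv ∈ Finset.Ioc cv (cv + k), 2 ^ (cv + k - jv) = 2 ^ k - 1 := by
  intro k
  induction k with
  | zero => intro cv; simp
  | succ k ih =>
    intro cv
    rw [show cv + (k+1) = (cv + k) + 1 from rfl]
    rw [Finset.sum_Ioc_succ_top (by omega)]
    have hcongr : ∑ jv ∈ Finset.Ioc cv (cv + k), 2 ^ (cv + k + 1 - jv)
        = ∑ jv ∈ Finset.Ioc cv (cv + k), 2 * 2 ^ (cv + k - jv) := by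
      apply Finset.sum_congr rfl
      intro jv hjv
      rw [Finset.mem_Ioc] at hjv
      rw [show cv + k + 1 - jv = (cv + k - jv) + 1 by omega, pow_succ]
      ring
    rw [hcongr, ← Finset.mul_sum, ih cv, Nat.sub_self, pow_zero]
    have h1 : 1 ≤ 2 ^ k := Nat.one_le_two_pow
    have h2 : 2 ^ (k + 1) = 2 ^ k * 2 := pow_succ 2 k
    omega

lemma sum_transfer (c d : Fin (n+1)) (h : ℕ → ℕ) :
    ∑ j0 ∈ Finset.Ioc c d, h (j0 : ℕ) = ∑ jv ∈ Finset.Ioc (c : ℕ) (d : ℕ), h jv := by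
  rw [← Fin.map_valEmbedding_Ioc, Finset.sum_map]
  rfl

lemma sum_transfer' (c d : Fin (n+1)) (N B : ℕ) :
    ∑ j0 ∈ Finset.Ioc c d, (if (j0 : ℕ) = N then 1 else 2 ^ (B - (j0 : ℕ)))
      = ∑ jv ∈ Finset.Ioc (c : ℕ) (d : ℕ), (if jv = N then 1 else 2 ^ (B - jv)) :=
  sum_transfer c d (fun jv => if jv = N then 1 else 2 ^ (B - jv))

/-- the standard vector: `ε_c + (q-1)·ε_b - q·ε_{b'}` (written additively). -/
def vA (b b' c : Fin (n+1)) (q : ℕ) : Fin (n+1) → ℤ :=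
  fun t => (if t = c then 1 else 0) + (if t = b then (q:ℤ) - 1 else 0) + (if t = b' then -(q:ℤ) else 0)

lemma vA_shift (b b' c j0 : Fin (n+1)) (q : ℕ) :
    (fun t => vA b b' c q t - (if t = c then (1:ℤ) else 0) + (if t = j0 then (1:ℤ) else 0))
      = vA b b' j0 q := by
  funext t
  simp only [vA]
  ring

lemma vA_c_eq_b (b b' : Fin (n+1)) (hb' : (b' : ℕ) = (b : ℕ) + 1) (q : ℕ) (hq : 1 ≤ q) :
    vA b b' b q = fun t => (if t = b then (q:ℤ) else 0) + (if t = b' then -(q:ℤ) else 0) := by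
  funext t
  simp only [vA, Fin.ext_iff]
  split_ifs <;> omega

lemma vA_c_eq_b' (b b' : Fin (n+1)) (hb' : (b' : ℕ) = (b : ℕ) + 1) (q : ℕ) (hq : 1 ≤ q) :
    vA b b' b' q = fun t => (if t = b then ((q - 1 : ℕ) : ℤ) else 0)
      + (if t = b' then -((q - 1 : ℕ) : ℤ) else 0) := by
  funext t
  simp only [vA, Fin.ext_iff]
  split_ifs <;> omega

lemma lemA (b b' : Fin (n+1)) (hb' : (b' : ℕ) = (b : ℕ) + 1) (q : ℕ) (hq : 1 ≤ q) :
    ∀ k : ℕ, ∀ c : Fin (n+1), (c : ℕ) + k = (b : ℕ) →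
      (Sol n (vA b b' c q)).Finite ∧ (Sol n (vA b b' c q)).ncard = 2 ^ k := by
  intro k
  induction k using Nat.strong_induction_on with
  | _ k ih =>
    intro c hck
    rcases Nat.eq_zero_or_pos k with hk0 | hkpos
    · subst hk0
      have hcb : c = b := Fin.ext (by omega)
      rw [hcb, vA_c_eq_b b b' hb' q hq]
      simpa using ncard_sol_terminal b b' hb' q
    · -- now c < b < b'
      have hcb : (c : ℕ) < (b : ℕ) := by omega
      -- the value of each piece
      have piece : ∀ j0 ∈ Finset.Ioc c b', (Sol n (vA b b' j0 q)).Finite ∧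
          (Sol n (vA b b' j0 q)).ncard
            = (if (j0 : ℕ) = (b' : ℕ) then 1 else 2 ^ ((b : ℕ) - (j0 : ℕ))) := by
        intro j0 hj0
        rw [Finset.mem_Ioc] at hj0
        obtain ⟨hcj, hjb'⟩ := hj0
        by_cases hjb : j0 = b'
        · rw [hjb, vA_c_eq_b' b b' hb' q hq]
          rw [if_pos rfl]
          exact ncard_sol_terminal b b' hb' (q - 1)
        · have hjbv : (j0 : ℕ) ≤ (b : ℕ) := by
            have := Fin.le_def.mp hjb'
            have hne : (j0 : ℕ) ≠ (b' : ℕ) := fun h => hjb (Fin.ext h)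
            omega
          have hcjv : (c : ℕ) < (j0 : ℕ) := Fin.lt_def.mp hcj
          rw [if_neg (fun h => hjb (Fin.ext h))]
          exact ih ((b : ℕ) - (j0 : ℕ)) (by omega) j0 (by omega)
      -- decomposition
      have hdecomp : Sol n (vA b b' c q)
          = ⋃ j0 ∈ Finset.Ioc c b', addE c j0 1 '' Sol n (vA b b' j0 q) := by
        ext m0
        rw [Set.mem_iUnion₂]
        constructor
        · intro hm0
          have hlow := lower_support hm0 (c : ℕ) (fun t ht => by
            have h1 : t ≠ c := fun h => by rw [h] at ht; omega
            have h2 : t ≠ b := fun h => by rw [h] at ht; omega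
            have h3 : t ≠ b' := fun h => by rw [h] at ht; omega
            simp [vA, h1, h2, h3])
          obtain ⟨hwf, hns⟩ := (mem_sol_iff _ _).mp hm0
          have hNSc := hns c
          have hvAc : vA b b' c q c = 1 := by
            have h2 : c ≠ b := fun h => by rw [h] at hcb; omega
            have h3 : c ≠ b' := fun h => by rw [h] at hcb; rw [hb'] at hcb; omega
            simp [vA, h2, h3]
          rw [hvAc] at hNSc
          unfold NS at hNSc
          have hin : ∑ i, (m0 i c : ℤ) = 0 := by
            apply Finset.sum_eq_zero
            intro i _
            by_cases hlt : i < c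
            · rw [hlow i (Fin.lt_def.mp hlt) c]; rfl
            · rw [hwf i c hlt]; rfl
          have hsumZ : ((∑ j, m0 c j : ℕ) : ℤ) = 1 := by push_cast; linarith
          have hsum : ∑ j, m0 c j = 1 := by exact_mod_cast hsumZ
          obtain ⟨j0, h1, h0⟩ := exists_unique_of_sum_eq_one _ hsum
          have hcj : c < j0 := by
            by_contra h
            rw [hwf c j0 h] at h1
            exact absurd h1 one_ne_zero.symm
          have hhigh := upper_support hm0 (b' : ℕ) (fun t ht => by
            have h1' : t ≠ c := fun h => by rw [h] at ht; omega
            have h2 : t ≠ b := fun h => by rw [h] at ht; omega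
            have h3 : t ≠ b' := fun h => by rw [h] at ht; omega
            simp [vA, h1', h2, h3])
          have hjb' : j0 ≤ b' := by
            by_contra h
            have : (b' : ℕ) < (j0 : ℕ) := Fin.lt_def.mp (lt_of_not_ge h)
            rw [hhigh j0 this c] at h1
            exact absurd h1 one_ne_zero.symm
          refine ⟨j0, Finset.mem_Ioc.mpr ⟨hcj, hjb'⟩, ?_⟩
          set m0' : Fin (n+1) → Fin (n+1) → ℕ := fun i j => if i = c then 0 else m0 i j with hm0'
          have haddE : addE c j0 1 m0' = m0 := by
            funext i j
            unfold addE
            rw [hm0']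
            by_cases hic : i = c
            · subst hic
              by_cases hjj : j = j0
              · subst hjj; simp [h1]
              · simp [hjj, h0 j hjj]
            · simp [hic]
          refine ⟨m0', ?_, haddE⟩
          rw [← haddE, mem_sol_addE_iff hcj] at hm0
          have hident := vA_shift b b' c j0 q
          -- mem_sol_addE uses q = 1 casts
          convert hm0 using 2
          rw [← hident]
          norm_num
        · rintro ⟨j0, hj0, m0', hm0', rfl⟩
          rw [Finset.mem_Ioc] at hj0
          rw [mem_sol_addE_iff hj0.1]
          have hident := vA_shift b b' c j0 q
          rw [show (fun t => vA b b' c q t - (if t = c then ((1:ℕ):ℤ) else 0)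
              + (if t = j0 then ((1:ℕ):ℤ) else 0))
            = vA b b' j0 q by rw [← hident]; norm_num]
          exact hm0'
      -- disjointness
      have hdisj : ∀ j0 ∈ Finset.Ioc c b', ∀ j1 ∈ Finset.Ioc c b', j0 ≠ j1 →
          Disjoint (addE c j0 1 '' Sol n (vA b b' j0 q)) (addE c j1 1 '' Sol n (vA b b' j1 q)) := by
        have key : ∀ j0 ∈ Finset.Ioc c b', ∀ m0 ∈ addE c j0 1 '' Sol n (vA b b' j0 q),
            m0 c j0 ≠ 0 ∧ ∀ j, j ≠ j0 → m0 c j = 0 := by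
          intro j0 hj0 m0 hm0
          rw [Finset.mem_Ioc] at hj0
          obtain ⟨m', hm', rfl⟩ := hm0
          have hcjv : (c : ℕ) < (j0 : ℕ) := Fin.lt_def.mp hj0.1
          have hlow := lower_support hm' (min (j0 : ℕ) (b : ℕ)) (fun t ht => by
            have h1 : t ≠ j0 := fun h => by rw [h] at ht; omega
            have h2 : t ≠ b := fun h => by rw [h] at ht; omega
            have h3 : t ≠ b' := fun h => by rw [h] at ht; omega
            simp [vA, h1, h2, h3])
          have hrowc : ∀ j, m' c j = 0 := hlow c (by omega)
          constructor
          · unfold addE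
            simp [hrowc j0]
          · intro j hj
            unfold addE
            simp [hj, hrowc j]
        intro j0 hj0 j1 hj1 hne
        rw [Set.disjoint_left]
        intro m0 hma hmb
        obtain ⟨h1a, h0a⟩ := key j0 hj0 m0 hma
        obtain ⟨h1b, h0b⟩ := key j1 hj1 m0 hmb
        exact h1a (h0b j0 hne)
      have hfin : ∀ j0 ∈ Finset.Ioc c b', (addE c j0 1 '' Sol n (vA b b' j0 q)).Finite :=
        fun j0 hj0 => ((piece j0 hj0).1).image _
      constructor
      · rw [hdecomp]
        exact biUnion_finite _ _ hfin
      · rw [hdecomp, ncard_biUnion _ _ hfin hdisj]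
        have hterm : ∀ j0 ∈ Finset.Ioc c b',
            (addE c j0 1 '' Sol n (vA b b' j0 q)).ncard
              = (if (j0 : ℕ) = (b' : ℕ) then 1 else 2 ^ ((b : ℕ) - (j0 : ℕ))) := by
          intro j0 hj0
          rw [Set.ncard_image_of_injective _ (addE_injective c j0 1)]
          exact (piece j0 hj0).2
        rw [Finset.sum_congr rfl hterm, sum_transfer' c b' (b' : ℕ) (b : ℕ)]
        rw [hb', Finset.sum_Ioc_succ_top (by omega), if_pos rfl]
        have hcongr : ∑ jv ∈ Finset.Ioc (c:ℕ) (b:ℕ),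
            (if jv = (b:ℕ) + 1 then 1 else 2 ^ ((b:ℕ) - jv))
            = ∑ jv ∈ Finset.Ioc (c:ℕ) ((c:ℕ) + k), 2 ^ ((c:ℕ) + k - jv) := by
          rw [show (b:ℕ) = (c:ℕ) + k from hck.symm]
          apply Finset.sum_congr rfl
          intro jv hjv
          rw [Finset.mem_Ioc] at hjv
          rw [if_neg (by omega)]
        rw [hcongr, geo k (c : ℕ)]
        have h1 : 1 ≤ 2 ^ k := Nat.one_le_two_pow
        omega

lemma pieceA (b b' : Fin (n+1)) (hb' : (b' : ℕ) = (b : ℕ) + 1) (q : ℕ) (hq : 1 ≤ q) :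
    ∀ j0 : Fin (n+1), (j0 : ℕ) ≤ (b' : ℕ) →
      (Sol n (vA b b' j0 q)).Finite ∧ (Sol n (vA b b' j0 q)).ncard
        = (if (j0 : ℕ) = (b' : ℕ) then 1 else 2 ^ ((b : ℕ) - (j0 : ℕ))) := by
  intro j0 hjb'
  by_cases hjb : j0 = b'
  · rw [hjb, vA_c_eq_b' b b' hb' q hq]
    rw [if_pos rfl]
    exact ncard_sol_terminal b b' hb' (q - 1)
  · have hne : (j0 : ℕ) ≠ (b' : ℕ) := fun h => hjb (Fin.ext h)
    rw [if_neg hne]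
    exact lemA b b' hb' q hq ((b : ℕ) - (j0 : ℕ)) j0 (by omega)

lemma mem_sol_addE2_iff {a a' j0 : Fin (n+1)} (ha1 : a < a') (ha2 : a < j0)
    (q1 q2 : ℕ) (m : Fin (n + 1) → Fin (n + 1) → ℕ) (v : Fin (n + 1) → ℤ) :
    addE a a' q1 (addE a j0 q2 m) ∈ Sol n v ↔
      m ∈ Sol n (fun t => v t - (if t = a then (q1:ℤ) else 0) + (if t = a' then (q1:ℤ) else 0)
        - (if t = a then (q2:ℤ) else 0) + (if t = j0 then (q2:ℤ) else 0)) := by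
  rw [mem_sol_addE_iff ha1, mem_sol_addE_iff ha2]

/-- the vector `l·ε_a + (1-l)·ε_{a'} + (q-1)·ε_b - q·ε_{b'}`. -/
def vI (a a' b b' : Fin (n+1)) (l q : ℕ) : Fin (n+1) → ℤ := fun t =>
  (if t = a then (l:ℤ) else 0) + (if t = a' then 1 - (l:ℤ) else 0)
  + (if t = b then (q:ℤ) - 1 else 0) + (if t = b' then -(q:ℤ) else 0)

lemma lemI (a a' b b' : Fin (n+1)) (ha' : (a' : ℕ) = (a : ℕ) + 1)
    (hb' : (b' : ℕ) = (b : ℕ) + 1) (hab : (a' : ℕ) < (b : ℕ))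
    (l q : ℕ) (hl : 1 ≤ l) (hq : 1 ≤ q) :
    (Sol n (vI a a' b b' l q)).Finite ∧
      (Sol n (vI a a' b b' l q)).ncard = 2 ^ ((b : ℕ) - (a : ℕ)) := by
  have haa' : a < a' := Fin.lt_def.mpr (by omega)
  have hna : a ≠ a' := Fin.ne_of_lt haa'
  have hav : (a:ℕ) < (a':ℕ) := by omega
  -- the first piece and the union pieces
  set P : Set (Fin (n+1) → Fin (n+1) → ℕ) := addE a a' l '' Sol n (vA b b' a' q) with hP
  set U : Set (Fin (n+1) → Fin (n+1) → ℕ) :=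
    ⋃ j0 ∈ Finset.Ioc a' b', addE a a' (l-1) '' (addE a j0 1 '' Sol n (vA b b' j0 q)) with hU
  -- identity for the P-piece
  have hidP : (fun t => vI a a' b b' l q t - (if t = a then (l:ℤ) else 0)
      + (if t = a' then (l:ℤ) else 0)) = vA b b' a' q := by
    funext t
    simp only [vI, vA, Fin.ext_iff]
    split_ifs <;> omega
  -- identity for the U-pieces
  have hidU : ∀ j0 : Fin (n+1), (a' : ℕ) < (j0 : ℕ) →
      (fun t => vI a a' b b' l q t - (if t = a then ((l-1:ℕ):ℤ) else 0)
        + (if t = a' then ((l-1:ℕ):ℤ) else 0)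
        - (if t = a then ((1:ℕ):ℤ) else 0) + (if t = j0 then ((1:ℕ):ℤ) else 0))
      = vA b b' j0 q := by
    intro j0 hj0
    funext t
    simp only [vI, vA, Fin.ext_iff, Nat.cast_one]
    split_ifs <;> omega
  -- row a of members of Sol (vA b b' j0 q) vanishes, for a < j0
  have hrowa : ∀ j0 : Fin (n+1), (a:ℕ) < (j0:ℕ) → ∀ m' ∈ Sol n (vA b b' j0 q),
      ∀ j, m' a j = 0 := by
    intro j0 hj0 m' hm' j
    have hlow := lower_support hm' (min (j0 : ℕ) (b : ℕ)) (fun t ht => by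
      have h1 : t ≠ j0 := fun h => by rw [h] at ht; omega
      have h2 : t ≠ b := fun h => by rw [h] at ht; omega
      have h3 : t ≠ b' := fun h => by rw [h] at ht; omega
      simp [vA, h1, h2, h3])
    exact hlow a (by omega) j
  -- row a structure of members of P
  have hkeyP : ∀ m0 ∈ P, m0 a a' = l ∧ ∀ j, j ≠ a' → m0 a j = 0 := by
    rintro m0 ⟨m', hm', rfl⟩
    have hz := hrowa a' (by omega) m' hm'
    constructor
    · unfold addE; simp [hz a']
    · intro j hj; unfold addE; simp [hj, hz j]
  -- row a structure of members of the U-pieces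
  have hkeyU : ∀ j0 ∈ Finset.Ioc a' b',
      ∀ m0 ∈ addE a a' (l-1) '' (addE a j0 1 '' Sol n (vA b b' j0 q)),
      m0 a j0 = 1 ∧ m0 a a' = l - 1 ∧ ∀ j, j ≠ j0 → j ≠ a' → m0 a j = 0 := by
    intro j0 hj0 m0 hm0
    rw [Finset.mem_Ioc] at hj0
    have hj0v : (a':ℕ) < (j0:ℕ) := Fin.lt_def.mp hj0.1
    have hja' : j0 ≠ a' := fun h => by rw [h] at hj0v; omega
    obtain ⟨m1, ⟨m', hm', rfl⟩, rfl⟩ := hm0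
    have hz := hrowa j0 (by omega) m' hm'
    refine ⟨?_, ?_, ?_⟩
    · unfold addE; simp [hja', hz j0]
    · unfold addE; simp [Ne.symm hja', hz a']
    · intro j hj hj'; unfold addE; simp [hj, hj', hz j]
  -- decomposition
  have hdecomp : Sol n (vI a a' b b' l q) = P ∪ U := by
    ext m0
    constructor
    · intro hm0
      have hlow := lower_support hm0 (a : ℕ) (fun t ht => by
        have h1 : t ≠ a := fun h => by rw [h] at ht; omega
        have h2 : t ≠ a' := fun h => by rw [h] at ht; omega
        have h3 : t ≠ b := fun h => by rw [h] at ht; omega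
        have h4 : t ≠ b' := fun h => by rw [h] at ht; omega
        simp [vI, h1, h2, h3, h4])
      have hhigh := upper_support hm0 (b' : ℕ) (fun t ht => by
        have h1 : t ≠ a := fun h => by rw [h] at ht; omega
        have h2 : t ≠ a' := fun h => by rw [h] at ht; omega
        have h3 : t ≠ b := fun h => by rw [h] at ht; omega
        have h4 : t ≠ b' := fun h => by rw [h] at ht; omega
        simp [vI, h1, h2, h3, h4])
      obtain ⟨hwf, hns⟩ := (mem_sol_iff _ _).mp hm0
      -- net flow at a is l
      have hvIa : vI a a' b b' l q a = l := by
        have h2 : a ≠ a' := hna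
        have h3 : a ≠ b := fun h => by rw [h] at hav; omega
        have h4 : a ≠ b' := fun h => by
          have : (a:ℕ) = (b':ℕ) := congrArg Fin.val h
          omega
        simp [vI, h2, h3, h4]
      have hNSa := hns a
      rw [hvIa] at hNSa
      unfold NS at hNSa
      have hin : ∑ i, (m0 i a : ℤ) = 0 := by
        apply Finset.sum_eq_zero
        intro i _
        by_cases hlt : i < a
        · rw [hlow i (Fin.lt_def.mp hlt) a]; rfl
        · rw [hwf i a hlt]; rfl
      have hsumZ : ((∑ j, m0 a j : ℕ) : ℤ) = l := by push_cast; linarith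
      have hsum : ∑ j, m0 a j = l := by exact_mod_cast hsumZ
      -- net flow at a' gives the lower bound on m0 a a'
      have hvIa' : vI a a' b b' l q a' = 1 - l := by
        have h1 : a' ≠ a := Ne.symm hna
        have h3 : a' ≠ b := fun h => by
          have : (a':ℕ) = (b:ℕ) := congrArg Fin.val h
          omega
        have h4 : a' ≠ b' := fun h => by
          have : (a':ℕ) = (b':ℕ) := congrArg Fin.val h
          omega
        simp [vI, h1, h3, h4]
      have hNSa' := hns a'
      rw [hvIa'] at hNSa'
      unfold NS at hNSa'
      have hin' : ∑ i, (m0 i a' : ℤ) = (m0 a a' : ℤ) := by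
        apply Finset.sum_eq_single
        · intro i _ hne
          by_cases hlt : i < a'
          · have hiv : (i:ℕ) < (a':ℕ) := Fin.lt_def.mp hlt
            by_cases hia : (i:ℕ) < (a:ℕ)
            · rw [hlow i hia a']; rfl
            · exact absurd (Fin.ext (by omega) : i = a) hne
          · rw [hwf i a' hlt]; rfl
        · intro h; exact absurd (Finset.mem_univ a) h
      rw [hin'] at hNSa'
      have hout' : (0:ℤ) ≤ ∑ j, (m0 a' j : ℤ) :=
        Finset.sum_nonneg (fun j _ => by positivity)
      have hge : l - 1 ≤ m0 a a' := by omega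
      rcases sum_split (m0 a) a' l hsum hge with ⟨hval, hrest⟩ | ⟨hval, _, j0, hja', hj1, hrest⟩
      · -- case A : member of P
        left
        set m0' : Fin (n+1) → Fin (n+1) → ℕ := fun i j => if i = a then 0 else m0 i j with hm0'
        have haddE : addE a a' l m0' = m0 := by
          funext i j
          unfold addE
          rw [hm0']
          by_cases hic : i = a
          · subst hic
            by_cases hjj : j = a'
            · subst hjj; simp [hval]
            · simp [hjj, hrest j hjj]
          · simp [hic]
        refine ⟨m0', ?_, haddE⟩
        rw [← haddE, mem_sol_addE_iff haa'] at hm0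
        rw [← hidP]
        exact hm0
      · -- case B : member of U
        right
        have hj0a : a < j0 := by
          by_contra h
          rw [hwf a j0 h] at hj1
          exact absurd hj1 one_ne_zero.symm
        have hj0a' : a' < j0 := by
          rw [Fin.lt_def]
          have := Fin.lt_def.mp hj0a
          rcases Nat.lt_or_ge (a':ℕ) (j0:ℕ) with h | h
          · exact h
          · exfalso
            exact hja' (Fin.ext (by omega))
        have hj0b' : j0 ≤ b' := by
          by_contra h
          have : (b' : ℕ) < (j0 : ℕ) := Fin.lt_def.mp (lt_of_not_ge h)
          rw [hhigh j0 this a] at hj1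
          exact absurd hj1 one_ne_zero.symm
        rw [hU, Set.mem_iUnion₂]
        refine ⟨j0, Finset.mem_Ioc.mpr ⟨hj0a', hj0b'⟩, ?_⟩
        set m0' : Fin (n+1) → Fin (n+1) → ℕ := fun i j => if i = a then 0 else m0 i j with hm0'
        have haddE : addE a a' (l-1) (addE a j0 1 m0') = m0 := by
          funext i j
          unfold addE
          rw [hm0']
          by_cases hic : i = a
          · subst hic
            by_cases hjj : j = a'
            · subst hjj
              simp [Ne.symm hja', hval]
            · by_cases hjj0 : j = j0
              · subst hjj0; simp [hja', hj1]
              · simp [hjj, hjj0, hrest j hjj0 hjj]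
          · simp [hic]
        refine ⟨addE a j0 1 m0', ⟨m0', ?_, rfl⟩, haddE⟩
        rw [← haddE, mem_sol_addE2_iff haa' hj0a] at hm0
        rw [← hidU j0 (Fin.lt_def.mp hj0a')]
        exact hm0
    · intro hm0
      rcases hm0 with hm0 | hm0
      · obtain ⟨m', hm', rfl⟩ := hm0
        rw [mem_sol_addE_iff haa', hidP]
        exact hm'
      · rw [hU, Set.mem_iUnion₂] at hm0
        obtain ⟨j0, hj0, m1, ⟨m', hm', rfl⟩, rfl⟩ := hm0
        rw [Finset.mem_Ioc] at hj0
        have hj0a : a < j0 := lt_trans haa' hj0.1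
        rw [mem_sol_addE2_iff haa' hj0a]
        rw [show (fun t => vI a a' b b' l q t - (if t = a then ((l-1:ℕ):ℤ) else 0)
            + (if t = a' then ((l-1:ℕ):ℤ) else 0)
            - (if t = a then ((1:ℕ):ℤ) else 0) + (if t = j0 then ((1:ℕ):ℤ) else 0))
          = vA b b' j0 q from hidU j0 (Fin.lt_def.mp hj0.1)]
        exact hm'
  -- finiteness and piece values
  have hpieceA := pieceA b b' hb' q hq
  have hfinP : P.Finite := ((hpieceA a' (by omega)).1).image _
  have hfinUp : ∀ j0 ∈ Finset.Ioc a' b',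
      (addE a a' (l-1) '' (addE a j0 1 '' Sol n (vA b b' j0 q))).Finite := by
    intro j0 hj0
    rw [Finset.mem_Ioc] at hj0
    exact (((hpieceA j0 (Fin.le_def.mp hj0.2)).1).image _).image _
  have hfinU : U.Finite := biUnion_finite _ _ hfinUp
  -- disjointness of the union pieces
  have hdisjU : ∀ j0 ∈ Finset.Ioc a' b', ∀ j1 ∈ Finset.Ioc a' b', j0 ≠ j1 →
      Disjoint (addE a a' (l-1) '' (addE a j0 1 '' Sol n (vA b b' j0 q)))
        (addE a a' (l-1) '' (addE a j1 1 '' Sol n (vA b b' j1 q))) := by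
    intro j0 hj0 j1 hj1 hne
    rw [Set.disjoint_left]
    intro m0 hma hmb
    obtain ⟨h1a, _, h0a⟩ := hkeyU j0 hj0 m0 hma
    obtain ⟨h1b, h2b, h0b⟩ := hkeyU j1 hj1 m0 hmb
    have hj0a' : j0 ≠ a' := by
      rw [Finset.mem_Ioc] at hj0
      exact Fin.ne_of_gt hj0.1
    rw [h0b j0 hne hj0a'] at h1a
    exact one_ne_zero h1a.symm
  -- disjointness of P and U
  have hdisjPU : Disjoint P U := by
    rw [Set.disjoint_left]
    intro m0 hmP hmU
    obtain ⟨-, h0P⟩ := hkeyP m0 hmP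
    rw [hU, Set.mem_iUnion₂] at hmU
    obtain ⟨j0, hj0, hm0⟩ := hmU
    obtain ⟨h1U, -, -⟩ := hkeyU j0 hj0 m0 hm0
    have hj0a' : j0 ≠ a' := by
      rw [Finset.mem_Ioc] at hj0
      exact Fin.ne_of_gt hj0.1
    rw [h0P j0 hj0a'] at h1U
    exact one_ne_zero h1U.symm
  constructor
  · rw [hdecomp]
    exact hfinP.union hfinU
  · rw [hdecomp, Set.ncard_union_eq hdisjPU hfinP hfinU]
    have hcardP : P.ncard = 2 ^ ((b:ℕ) - (a':ℕ)) := by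
      rw [hP, Set.ncard_image_of_injective _ (addE_injective a a' l)]
      have := hpieceA a' (by omega)
      rw [this.2, if_neg (by omega)]
    have hcardU : U.ncard = 2 ^ ((b:ℕ) - (a':ℕ)) := by
      rw [hU, ncard_biUnion _ _ hfinUp hdisjU]
      have hterm : ∀ j0 ∈ Finset.Ioc a' b',
          (addE a a' (l-1) '' (addE a j0 1 '' Sol n (vA b b' j0 q))).ncard
            = (if (j0 : ℕ) = (b' : ℕ) then 1 else 2 ^ ((b : ℕ) - (j0 : ℕ))) := by
        intro j0 hj0
        rw [Finset.mem_Ioc] at hj0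
        rw [Set.ncard_image_of_injective _ (addE_injective a a' (l-1)),
          Set.ncard_image_of_injective _ (addE_injective a j0 1)]
        exact (hpieceA j0 (Fin.le_def.mp hj0.2)).2
      rw [Finset.sum_congr rfl hterm, sum_transfer' a' b' (b' : ℕ) (b : ℕ)]
      rw [hb', Finset.sum_Ioc_succ_top (by omega), if_pos rfl]
      have hcongr : ∑ jv ∈ Finset.Ioc (a':ℕ) (b:ℕ),
          (if jv = (b:ℕ) + 1 then 1 else 2 ^ ((b:ℕ) - jv))
          = ∑ jv ∈ Finset.Ioc (a':ℕ) ((a':ℕ) + ((b:ℕ) - (a':ℕ))), 2 ^ ((a':ℕ) + ((b:ℕ) - (a':ℕ)) - jv) := by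
        rw [show (a':ℕ) + ((b:ℕ) - (a':ℕ)) = (b:ℕ) by omega]
        apply Finset.sum_congr rfl
        intro jv hjv
        rw [Finset.mem_Ioc] at hjv
        rw [if_neg (by omega)]
      rw [hcongr, geo ((b:ℕ) - (a':ℕ)) (a':ℕ)]
      have h1 : 1 ≤ 2 ^ ((b:ℕ) - (a':ℕ)) := Nat.one_le_two_pow
      omega
    rw [hcardP, hcardU]
    have h2 : (b:ℕ) - (a:ℕ) = ((b:ℕ) - (a':ℕ)) + 1 := by omega
    rw [h2, pow_succ]
    ring

lemma alpha_apply (j : Fin n) (t : Fin (n+1)) :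
    alphaA n j t = (if (t:ℕ) = (j:ℕ) then (1:ℤ) else 0) - (if (t:ℕ) = (j:ℕ) + 1 then 1 else 0) := by
  simp only [alphaA, Pi.sub_apply, eps, Pi.single_apply, Fin.ext_iff, Fin.coe_castSucc,
    Fin.val_succ]

lemma sum_ind_A (av bv tv : ℕ) :
    ∑ jv ∈ Finset.Ico av bv, (if tv = jv then (1:ℤ) else 0)
      = if av ≤ tv ∧ tv < bv then 1 else 0 := by
  rw [Finset.sum_ite_eq]
  simp [Finset.mem_Ico]

lemma sum_ind_B (av bv tv : ℕ) :
    ∑ jv ∈ Finset.Ico av bv, (if tv = jv + 1 then (1:ℤ) else 0)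
      = if av + 1 ≤ tv ∧ tv ≤ bv then 1 else 0 := by
  rcases tv with _ | tu
  · rw [Finset.sum_eq_zero (fun jv _ => if_neg (by omega))]
    rw [if_neg (by omega)]
  · have hc : ∀ jv ∈ Finset.Ico av bv,
        (if tu + 1 = jv + 1 then (1:ℤ) else 0) = (if tu = jv then (1:ℤ) else 0) :=
      fun jv _ => if_congr (by omega) rfl rfl
    rw [Finset.sum_congr rfl hc, Finset.sum_ite_eq]
    simp only [Finset.mem_Ico]
    split_ifs <;> omega

lemma sum_alpha_Ico (a b : Fin n) (hab : (a:ℕ) ≤ (b:ℕ)) (t : Fin (n+1)) :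
    (∑ j ∈ Finset.Ico a b, alphaA n j) t
      = (if (t:ℕ) = (a:ℕ) then (1:ℤ) else 0) + (if (t:ℕ) = (b:ℕ) then -1 else 0) := by
  rw [Finset.sum_apply]
  rw [Finset.sum_congr rfl (fun j _ => alpha_apply j t)]
  have htrans : ∑ j ∈ Finset.Ico a b,
      ((if (t:ℕ) = (j:ℕ) then (1:ℤ) else 0) - (if (t:ℕ) = (j:ℕ)+1 then 1 else 0))
      = ∑ jv ∈ Finset.Ico (a:ℕ) (b:ℕ),
        ((if (t:ℕ) = jv then (1:ℤ) else 0) - (if (t:ℕ) = jv+1 then 1 else 0)) := by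
    rw [← Fin.map_valEmbedding_Ico, Finset.sum_map]
    rfl
  rw [htrans, Finset.sum_sub_distrib, sum_ind_A, sum_ind_B]
  split_ifs <;> omega

lemma vec_ii (a b : Fin n) (hab : (a:ℕ) ≤ (b:ℕ)) (m : ℕ) :
    (∑ j ∈ Finset.Ico a b, alphaA n j) + (m:ℤ) • alphaA n b
      = vA b.castSucc b.succ a.castSucc m := by
  funext t
  rw [Pi.add_apply, Pi.smul_apply, smul_eq_mul, sum_alpha_Ico a b hab t, alpha_apply b t]
  simp only [mul_sub, mul_ite, mul_one, mul_zero, vA, Fin.ext_iff, Fin.coe_castSucc,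
    Fin.val_succ]
  split_ifs <;> omega

lemma Ioo_eq_Ico (a b : Fin n) (hb : (a:ℕ)+1 < n) :
    Finset.Ioo a b = Finset.Ico (⟨(a:ℕ)+1, hb⟩ : Fin n) b := by
  ext j
  simp only [Finset.mem_Ioo, Finset.mem_Ico, Fin.lt_def, Fin.le_def]
  omega

lemma vec_i (a b : Fin n) (hab : (a:ℕ)+2 ≤ (b:ℕ)) (l m : ℕ) :
    (l:ℤ) • alphaA n a + (∑ j ∈ Finset.Ioo a b, alphaA n j) + (m:ℤ) • alphaA n b
      = vI a.castSucc a.succ b.castSucc b.succ l m := by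
  have hb : (a:ℕ)+1 < n := lt_of_le_of_lt (by omega) b.isLt
  rw [Ioo_eq_Ico a b hb]
  funext t
  rw [Pi.add_apply, Pi.add_apply, Pi.smul_apply, Pi.smul_apply, smul_eq_mul, smul_eq_mul,
    sum_alpha_Ico (⟨(a:ℕ)+1, hb⟩ : Fin n) b (by show (a:ℕ)+1 ≤ (b:ℕ); omega) t, alpha_apply a t, alpha_apply b t]
  simp only [mul_sub, mul_ite, mul_one, mul_zero, vI, Fin.ext_iff, Fin.coe_castSucc,
    Fin.val_succ]
  split_ifs <;> omega

end KW

/-- (i) For `a + 2 ≤ b` and `l, m ≥ 1`: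
`K(l·α_a + α_{a+1} + ⋯ + α_{b-1} + m·α_b) = 2^{b-a}`.
(ii) For `a + 1 ≤ b` and `m ≥ 1`:
`K(α_a + α_{a+1} + ⋯ + α_{b-1} + m·α_b) = 2^{b-a}`. -/


theorem kostant_weighted_consecutive_simple_roots (n : ℕ) (hn : 1 ≤ n) :
    (∀ a b : Fin n, (a : ℕ) + 2 ≤ (b : ℕ) → ∀ l m : ℕ, 1 ≤ l → 1 ≤ m →
      kostant n ((l : ℤ) • alphaA n a + (∑ j ∈ Finset.Ioo a b, alphaA n j)
          + (m : ℤ) • alphaA n b)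
        = 2 ^ ((b : ℕ) - (a : ℕ))) ∧
    (∀ a b : Fin n, (a : ℕ) + 1 ≤ (b : ℕ) → ∀ m : ℕ, 1 ≤ m →
      kostant n ((∑ j ∈ Finset.Ico a b, alphaA n j) + (m : ℤ) • alphaA n b)
        = 2 ^ ((b : ℕ) - (a : ℕ))) := by
  constructor
  · intro a b hab l m hl hm
    rw [KW.kostant_eq, KW.vec_i a b hab l m]
    have h := KW.lemI a.castSucc a.succ b.castSucc b.succ (by simp) (by simp)
      (by simp only [Fin.val_succ, Fin.coe_castSucc]; omega) l m hl hm
    rw [h.2]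
    simp
  · intro a b hab m hm
    rw [KW.kostant_eq, KW.vec_ii a b (by omega) m]
    have h := KW.lemA b.castSucc b.succ (by simp) m hm ((b:ℕ) - (a:ℕ)) a.castSucc
      (by simp only [Fin.coe_castSucc]; omega)
    exact h.2
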